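/- Let A ∈ ℝ^{m×n}, let ε > 0, and let x ∈ ℝⁿ with ‖Ax‖ > ε. Set τ₊ = σ_max(A)²/(‖Ax‖ − ε). Then τ₊ ‖(AAᵀ + ε τ₊ I)⁻¹ A x‖ ≥ 1, and the map τ ↦ τ ‖(AAᵀ + ε τ I)⁻¹ A x‖ tends to 0 as τ → 0⁺. -/

import Mathlib

open scoped Matrix.Norms.L2Operator
open Matrix

noncomputable def vecNorm {k : ℕ} (v : Fin k → ℝ) : ℝ := Real.sqrt (∑ i, v i ^ 2)

noncomputable def sigmaMax {m n : ℕ} (A : Matrix (Fin m) (Fin n) ℝ) : ℝ :=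
  ⨆ x : {v : Fin n → ℝ // vecNorm v ≤ 1}, vecNorm (A.mulVec x.1)

lemma vecNorm_eq {k : ℕ} (v : Fin k → ℝ) :
    vecNorm v = ‖(WithLp.equiv 2 (Fin k → ℝ)).symm v‖ := by
  rw [EuclideanSpace.norm_eq]; simp [vecNorm, Real.norm_eq_abs, sq_abs]

lemma vecNorm_nonneg {k : ℕ} (v : Fin k → ℝ) : 0 ≤ vecNorm v := Real.sqrt_nonneg _

lemma vecNorm_add_le {k : ℕ} (u v : Fin k → ℝ) :
    vecNorm (u + v) ≤ vecNorm u + vecNorm v := by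
  rw [vecNorm_eq, vecNorm_eq, vecNorm_eq]; exact norm_add_le _ _

lemma vecNorm_sub_le {k : ℕ} (u v : Fin k → ℝ) :
    vecNorm (u - v) ≤ vecNorm u + vecNorm v := by
  rw [vecNorm_eq, vecNorm_eq, vecNorm_eq]; exact norm_sub_le _ _

lemma vecNorm_smul {k : ℕ} (c : ℝ) (v : Fin k → ℝ) :
    vecNorm (c • v) = |c| * vecNorm v := by
  rw [vecNorm_eq, vecNorm_eq]; exact norm_smul c _

lemma vecNorm_sq {k : ℕ} (v : Fin k → ℝ) : vecNorm v ^ 2 = v ⬝ᵥ v := by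
  rw [vecNorm, Real.sq_sqrt (by positivity)]; simp [dotProduct, sq]

lemma vecNorm_eq_zero {k : ℕ} {v : Fin k → ℝ} (h : vecNorm v = 0) : v = 0 := by
  rw [vecNorm_eq, norm_eq_zero] at h
  exact congrArg (WithLp.equiv 2 (Fin k → ℝ)) h

lemma dot_le {k : ℕ} (u v : Fin k → ℝ) : u ⬝ᵥ v ≤ vecNorm u * vecNorm v := by
  rw [vecNorm_eq, vecNorm_eq]
  have := real_inner_le_norm ((WithLp.equiv 2 (Fin k → ℝ)).symm u)
    ((WithLp.equiv 2 (Fin k → ℝ)).symm v)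
  simpa [PiLp.inner_apply, RCLike.inner_apply, dotProduct, mul_comm] using this

lemma key3 {m n : ℕ} (A : Matrix (Fin m) (Fin n) ℝ) : sigmaMax A = ‖A‖ := by
  set T := (Matrix.toEuclideanLin (𝕜 := ℝ) (m := Fin m) (n := Fin n)).trans
      LinearMap.toContinuousLinearMap A with hT
  have h1 : ‖A‖ = ‖T‖ := rfl
  rw [h1, ← T.sSup_unitClosedBall_eq_norm, sSup_image']
  rw [sigmaMax, ← sSup_range, ← sSup_range]
  congr 1
  ext r
  constructor
  · rintro ⟨⟨v, hv⟩, rfl⟩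
    refine ⟨⟨(WithLp.equiv 2 (Fin n → ℝ)).symm v, ?_⟩, ?_⟩
    · rw [Metric.mem_closedBall, dist_zero_right]; rwa [vecNorm_eq] at hv
    · simp only [vecNorm_eq]; congr 1
  · rintro ⟨⟨v, hv⟩, rfl⟩
    refine ⟨⟨(WithLp.equiv 2 (Fin n → ℝ)) v, ?_⟩, ?_⟩
    · rw [vecNorm_eq]
      simpa [Metric.mem_closedBall, dist_zero_right] using hv
    · simp only [vecNorm_eq]; congr 1

lemma key1 {m n : ℕ} (A : Matrix (Fin m) (Fin n) ℝ) (v : Fin n → ℝ) :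
    vecNorm (A.mulVec v) ≤ sigmaMax A * vecNorm v := by
  rw [key3, vecNorm_eq, vecNorm_eq]
  exact A.l2_opNorm_mulVec _

lemma transpose_eq_conj {m n : ℕ} (A : Matrix (Fin m) (Fin n) ℝ) : Aᵀ = Aᴴ := by
  ext i j; simp [Matrix.conjTranspose_apply]

lemma key2 {m n : ℕ} (A : Matrix (Fin m) (Fin n) ℝ) (v : Fin m → ℝ) :
    vecNorm (Aᵀ.mulVec v) ≤ sigmaMax A * vecNorm v := by
  rw [key3]
  have h := key1 Aᵀ v
  rw [key3, transpose_eq_conj A, Matrix.l2_opNorm_conjTranspose] at h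
  exact h

lemma Mpos {m n : ℕ} (A : Matrix (Fin m) (Fin n) ℝ) {c : ℝ} (hc : 0 < c) :
    (A * A.transpose + c • (1 : Matrix (Fin m) (Fin m) ℝ)).PosDef := by
  have h1 : (A * A.transpose).PosSemidef := by
    have := Matrix.posSemidef_self_mul_conjTranspose A
    simpa [← transpose_eq_conj] using this
  refine Matrix.PosDef.posSemidef_add h1 ?_
  rw [Matrix.smul_one_eq_diagonal, Matrix.posDef_diagonal_iff]
  exact fun _ => hc

section M
variable {m n : ℕ} (A : Matrix (Fin m) (Fin n) ℝ) {c : ℝ} (hc : 0 < c)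

lemma M_mul_inv (hc : 0 < c) (v : Fin m → ℝ) :
    (A * Aᵀ + c • 1) *ᵥ ((A * Aᵀ + c • 1)⁻¹ *ᵥ v) = v := by
  rw [Matrix.mulVec_mulVec, Matrix.mul_nonsing_inv _
      ((Matrix.isUnit_iff_isUnit_det _).1 (Mpos A hc).isUnit), Matrix.one_mulVec]

lemma M_inv_mul (hc : 0 < c) (v : Fin m → ℝ) :
    (A * Aᵀ + c • 1)⁻¹ *ᵥ ((A * Aᵀ + c • 1) *ᵥ v) = v := by
  rw [Matrix.mulVec_mulVec, Matrix.nonsing_inv_mul _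
      ((Matrix.isUnit_iff_isUnit_det _).1 (Mpos A hc).isUnit), Matrix.one_mulVec]

lemma M_apply (v : Fin m → ℝ) :
    (A * Aᵀ + c • 1) *ᵥ v = A *ᵥ (Aᵀ *ᵥ v) + c • v := by
  rw [Matrix.add_mulVec, Matrix.smul_mulVec, Matrix.one_mulVec, Matrix.mulVec_mulVec]

lemma M_upper (hc : 0 < c) (v : Fin m → ℝ) :
    vecNorm ((A * Aᵀ + c • 1) *ᵥ v) ≤ (sigmaMax A ^ 2 + c) * vecNorm v := by
  rw [M_apply]
  refine (vecNorm_add_le _ _).trans ?_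
  have h1 : vecNorm (A *ᵥ (Aᵀ *ᵥ v)) ≤ sigmaMax A ^ 2 * vecNorm v := by
    refine (key1 A _).trans ?_
    have h0 : 0 ≤ sigmaMax A := by rw [key3]; exact norm_nonneg A
    calc sigmaMax A * vecNorm (Aᵀ *ᵥ v) ≤ sigmaMax A * (sigmaMax A * vecNorm v) :=
          mul_le_mul_of_nonneg_left (key2 A v) h0
      _ = sigmaMax A ^ 2 * vecNorm v := by ring
  have h2 : vecNorm (c • v) = c * vecNorm v := by
    rw [vecNorm_smul, abs_of_pos hc]
  linarith [h1, h2.le]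

lemma M_lower (hc : 0 < c) (v : Fin m → ℝ) :
    c * vecNorm v ≤ vecNorm ((A * Aᵀ + c • 1) *ᵥ v) := by
  rcases eq_or_lt_of_le (vecNorm_nonneg v) with h | h
  · have hv : v = 0 := vecNorm_eq_zero h.symm
    simp [hv, ← h, Matrix.mulVec_zero, vecNorm]
  · have hdot : c * vecNorm v ^ 2 ≤ v ⬝ᵥ ((A * Aᵀ + c • 1) *ᵥ v) := by
      rw [M_apply]
      have hpsd : 0 ≤ v ⬝ᵥ (A *ᵥ (Aᵀ *ᵥ v)) := by
        rw [Matrix.mulVec_mulVec]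
        have := (Matrix.posSemidef_self_mul_conjTranspose A).dotProduct_mulVec_nonneg v
        simpa [← transpose_eq_conj] using this
      have : v ⬝ᵥ (c • v) = c * (v ⬝ᵥ v) := by simp [dotProduct_smul, smul_eq_mul]
      rw [dotProduct_add, this, ← vecNorm_sq]
      linarith
    have hcs := dot_le v ((A * Aᵀ + c • 1) *ᵥ v)
    have := hdot.trans hcs
    nlinarith [vecNorm_nonneg v]

end M
lemma range_lemma {m n : ℕ} (A : Matrix (Fin m) (Fin n) ℝ) (x : Fin n → ℝ) :
    ∃ z, (A * Aᵀ) *ᵥ z = A *ᵥ x := by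
  have hle : LinearMap.range (A * Aᵀ).mulVecLin ≤ LinearMap.range A.mulVecLin := by
    rintro _ ⟨v, rfl⟩
    exact ⟨Aᵀ *ᵥ v, by simp [Matrix.mulVecLin_apply, Matrix.mulVec_mulVec, Matrix.mulVec_transpose]⟩
  have hrank : Matrix.rank A ≤ Matrix.rank (A * Aᵀ) := (Matrix.rank_self_mul_transpose A).ge
  have heq : LinearMap.range (A * Aᵀ).mulVecLin = LinearMap.range A.mulVecLin :=
    Submodule.eq_of_le_of_finrank_le hle hrank
  have hx : A *ᵥ x ∈ LinearMap.range (A * Aᵀ).mulVecLin := by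
    rw [heq]; exact ⟨x, rfl⟩
  obtain ⟨z, hz⟩ := hx
  exact ⟨z, hz⟩

theorem stmt7 {m n : ℕ} (A : Matrix (Fin m) (Fin n) ℝ) (ε : ℝ) (hε : 0 < ε)
    (x : Fin n → ℝ) (hx : ε < vecNorm (A.mulVec x))
    (τp : ℝ) (hτp : τp = sigmaMax A ^ 2 / (vecNorm (A.mulVec x) - ε)) :
    1 ≤ τp * vecNorm ((A * A.transpose +
      (ε * τp) • (1 : Matrix (Fin m) (Fin m) ℝ))⁻¹.mulVec (A.mulVec x)) ∧
    Filter.Tendsto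
      (fun τ : ℝ => τ * vecNorm ((A * A.transpose +
        (ε * τ) • (1 : Matrix (Fin m) (Fin m) ℝ))⁻¹.mulVec (A.mulVec x)))
      (nhdsWithin 0 (Set.Ioi (0 : ℝ))) (nhds 0) := by
  have hσ0 : 0 ≤ sigmaMax A := by rw [key3]; exact norm_nonneg A
  set y := A.mulVec x with hy
  have hd : 0 < vecNorm y - ε := sub_pos.2 hx
  have hy0 : 0 < vecNorm y := hε.trans hx
  have hσpos : 0 < sigmaMax A := by
    rcases eq_or_lt_of_le hσ0 with h | h
    · exfalso
      have h1 := key1 A x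
      rw [← h, zero_mul] at h1
      linarith
    · exact h
  have hS : 0 < sigmaMax A ^ 2 := pow_pos hσpos 2
  have hτppos : 0 < τp := hτp ▸ div_pos hS hd
  constructor
  · have hcp : 0 < ε * τp := mul_pos hε hτppos
    set w := (A * Aᵀ + (ε * τp) • 1)⁻¹ *ᵥ y with hw
    have hMw : (A * Aᵀ + (ε * τp) • 1) *ᵥ w = y := M_mul_inv A hcp y
    have hub : vecNorm y ≤ (sigmaMax A ^ 2 + ε * τp) * vecNorm w := by
      conv_lhs => rw [← hMw]
      exact M_upper A hcp w
    set S := sigmaMax A ^ 2 with hSdef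
    set N := vecNorm y with hNdef
    set W := vecNorm w with hWdef
    have e1 : S + ε * τp = S * N / (N - ε) := by rw [hτp]; field_simp; ring
    rw [e1, div_mul_eq_mul_div, le_div_iff₀ hd] at hub
    have h2 : N - ε ≤ S * W := by
      have h3 : N * (N - ε) ≤ N * (S * W) := by nlinarith [hub]
      exact le_of_mul_le_mul_left h3 hy0
    rw [hτp, div_mul_eq_mul_div, le_div_iff₀ hd, one_mul]
    linarith
  · obtain ⟨z, hz⟩ := range_lemma A x
    have hupper : ∀ τ ∈ Set.Ioi (0:ℝ),
        τ * vecNorm ((A * Aᵀ + (ε*τ) • 1)⁻¹ *ᵥ y) ≤ 2 * vecNorm z * τ := by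
      intro τ hτ
      have hτ0 : (0:ℝ) < τ := hτ
      have hc : 0 < ε * τ := mul_pos hε hτ0
      set u := (A * Aᵀ + (ε*τ) • 1)⁻¹ *ᵥ z with hu
      have hMu : (A * Aᵀ + (ε*τ) • 1) *ᵥ u = z := M_mul_inv A hc z
      have hwz : (A * Aᵀ + (ε*τ) • 1)⁻¹ *ᵥ y = z - (ε*τ) • u := by
        have hy2 : y = (A * Aᵀ + (ε*τ) • 1) *ᵥ z - (ε*τ) • z := by
          rw [Matrix.add_mulVec, Matrix.smul_mulVec, Matrix.one_mulVec, hy, ← hz]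
          abel
        rw [hy2, Matrix.mulVec_sub, M_inv_mul A hc, Matrix.mulVec_smul]
      rw [hwz]
      have h1 : vecNorm (z - (ε*τ) • u) ≤ vecNorm z + (ε*τ) * vecNorm u := by
        refine (vecNorm_sub_le _ _).trans ?_
        rw [vecNorm_smul, abs_of_pos hc]
      have h2 : (ε*τ) * vecNorm u ≤ vecNorm z := by
        have h3 := M_lower A hc u
        rwa [hMu] at h3
      nlinarith [vecNorm_nonneg (z - (ε*τ) • u), vecNorm_nonneg u, vecNorm_nonneg z]
    refine squeeze_zero' (g := fun τ : ℝ => 2 * vecNorm z * τ) ?_ ?_ ?_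
    · exact eventually_mem_nhdsWithin.mono fun τ hτ =>
        mul_nonneg (le_of_lt hτ) (vecNorm_nonneg _)
    · exact eventually_mem_nhdsWithin.mono fun τ hτ => hupper τ hτ
    · have h4 : Filter.Tendsto (fun τ : ℝ => 2 * vecNorm z * τ) (nhds 0)
          (nhds (2 * vecNorm z * 0)) := (continuous_const.mul continuous_id).tendsto 0
      simpa using h4.mono_left nhdsWithin_le_nhds
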